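/- Let p ∈ Δ₄. Then f(M·p) ≥ 0 for every doubly stochastic 4×4 real matrix M if and only if f(P·p) ≥ 0 for every 4×4 permutation matrix P. (This characterizes the thermally non-entanglable set at infinite ambient temperature, βE = 0, as the intersection of the 24 sets Ω_π = {p : f(P_π p) ≥ 0}.) -/

import Mathlib

open Finset

/-- The probability simplex Δ₄ ⊂ ℝ⁴. -/
def inSimplex (p : Fin 4 → ℝ) : Prop := (∀ i, 0 ≤ p i) ∧ ∑ i, p i = 1

/-- The entanglement witness f(q) = 4 q₁ q₄ − (q₂ − q₃)². -/
noncomputable def fwit (q : Fin 4 → ℝ) : ℝ := 4 * q 0 * q 3 - (q 1 - q 2) ^ 2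

/-- A 4×4 real matrix is doubly stochastic. -/
def IsDoublyStochastic (M : Matrix (Fin 4) (Fin 4) ℝ) : Prop :=
  (∀ i j, 0 ≤ M i j) ∧ (∀ i, ∑ j, M i j = 1) ∧ (∀ j, ∑ i, M i j = 1)

/-- The permutation matrix of σ. -/
def permMatrix (σ : Equiv.Perm (Fin 4)) : Matrix (Fin 4) (Fin 4) ℝ :=
  fun i j => if σ i = j then 1 else 0

lemma permMatrix_eq (σ : Equiv.Perm (Fin 4)) : permMatrix σ = σ.permMatrix ℝ := by
  ext i j
  simp [permMatrix, Equiv.Perm.permMatrix, PEquiv.toMatrix_apply, Equiv.toPEquiv_apply]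

lemma permMatrix_mulVec (σ : Equiv.Perm (Fin 4)) (p : Fin 4 → ℝ) (i : Fin 4) :
    (permMatrix σ).mulVec p i = p (σ i) := by
  simp [permMatrix, Matrix.mulVec, dotProduct]

/-- p ∈ Δ₄ satisfies f(M p) ≥ 0 for every doubly stochastic M iff
f(P p) ≥ 0 for every permutation matrix P (the βE = 0 thermally non-entanglable set
is the intersection of the 24 sets Ω_π). -/
theorem TNE_infinite_temperature (p : Fin 4 → ℝ) (hp : inSimplex p) :
    (∀ M : Matrix (Fin 4) (Fin 4) ℝ, IsDoublyStochastic M → 0 ≤ fwit (M.mulVec p)) ↔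
      (∀ σ : Equiv.Perm (Fin 4), 0 ≤ fwit ((permMatrix σ).mulVec p)) := by
  constructor
  · intro h σ
    refine h _ ⟨fun i j => ?_, fun i => ?_, fun j => ?_⟩
    · unfold permMatrix; split_ifs <;> norm_num
    · simp [permMatrix]
    · simp [permMatrix, Equiv.apply_eq_iff_eq_symm_apply]
  · intro h M hM
    have hM' : M ∈ doublyStochastic ℝ (Fin 4) := by
      rw [mem_doublyStochastic_iff_sum]; exact hM
    obtain ⟨w, hw0, hw1, hwM⟩ := exists_eq_sum_perm_of_mem_doublyStochastic hM'
    set q : Equiv.Perm (Fin 4) → Fin 4 → ℝ := fun σ => (permMatrix σ).mulVec p with hq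
    have hMp : ∀ i, M.mulVec p i = ∑ σ, w σ * q σ i := by
      intro i
      rw [← hwM]
      simp only [hq, permMatrix_eq]
      simp only [Matrix.mulVec, dotProduct, Finset.sum_apply, Matrix.smul_apply,
        smul_eq_mul, Matrix.sum_apply, Finset.sum_mul, Finset.mul_sum, mul_assoc]
      rw [Finset.sum_comm]
    -- the complex numbers
    set ζ : Equiv.Perm (Fin 4) → ℂ :=
      fun σ => ((q σ 0 - q σ 3 : ℝ) : ℂ) + (q σ 1 - q σ 2 : ℝ) * Complex.I with hζ
    have hnorm : ∀ σ, ‖ζ σ‖ ≤ q σ 0 + q σ 3 := by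
      intro σ
      have hf := h σ
      have h0 : 0 ≤ q σ 0 := by rw [hq]; simp only; rw [permMatrix_mulVec]; exact hp.1 _
      have h3 : 0 ≤ q σ 3 := by rw [hq]; simp only; rw [permMatrix_mulVec]; exact hp.1 _
      have hsq : ‖ζ σ‖ ^ 2 = (q σ 0 - q σ 3) ^ 2 + (q σ 1 - q σ 2) ^ 2 := by
        rw [hζ]
        simp only
        rw [Complex.sq_norm, Complex.normSq_add_mul_I]
      have hfq : 0 ≤ 4 * q σ 0 * q σ 3 - (q σ 1 - q σ 2) ^ 2 := hf
      nlinarith [norm_nonneg (ζ σ), sq_nonneg (‖ζ σ‖ + (q σ 0 + q σ 3))]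
    set A := M.mulVec p with hA
    have hZ : (∑ σ, w σ • ζ σ) = ((A 0 - A 3 : ℝ) : ℂ) + (A 1 - A 2 : ℝ) * Complex.I := by
      apply Complex.ext
      · simp [hζ, Complex.re_sum, Complex.smul_re, hMp, Finset.sum_sub_distrib, mul_sub]
      · simp [hζ, Complex.im_sum, Complex.smul_im, hMp, Finset.sum_sub_distrib, mul_sub]
    have hZn : ‖(∑ σ, w σ • ζ σ)‖ ≤ A 0 + A 3 := by
      calc ‖(∑ σ, w σ • ζ σ)‖ ≤ ∑ σ, ‖w σ • ζ σ‖ := norm_sum_le _ _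
        _ = ∑ σ, w σ * ‖ζ σ‖ := by
            refine Finset.sum_congr rfl fun σ _ => ?_
            rw [norm_smul, Real.norm_eq_abs, abs_of_nonneg (hw0 σ)]
        _ ≤ ∑ σ, w σ * (q σ 0 + q σ 3) := by
            refine Finset.sum_le_sum fun σ _ => mul_le_mul_of_nonneg_left (hnorm σ) (hw0 σ)
        _ = A 0 + A 3 := by simp [hMp, Finset.sum_add_distrib, mul_add]
    rw [hZ] at hZn
    have hsq2 : (A 0 - A 3) ^ 2 + (A 1 - A 2) ^ 2 ≤ (A 0 + A 3) ^ 2 := by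
      have := norm_nonneg (((A 0 - A 3 : ℝ) : ℂ) + (A 1 - A 2 : ℝ) * Complex.I)
      have hn : ‖((A 0 - A 3 : ℝ) : ℂ) + (A 1 - A 2 : ℝ) * Complex.I‖ ^ 2
          = (A 0 - A 3) ^ 2 + (A 1 - A 2) ^ 2 := by
        rw [Complex.sq_norm, Complex.normSq_add_mul_I]
      nlinarith
    show 0 ≤ 4 * A 0 * A 3 - (A 1 - A 2) ^ 2
    nlinarith
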